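/- There exists a constant C > 0 such that for every integer n ≥ 2, ∑ over 5-tuples of positive integers (x₁,...,x₅) with x₁+x₂+x₃+x₄ = n and x₄+x₃ = x₂+x₅ of ∏_{i=1}^{5} x_i^(-5/7) ≤ C. -/

import Mathlib

open Finset

noncomputable def gg (k : ℕ) : ℝ := (k:ℝ) ^ (-5/7 : ℝ)

lemma gg_nonneg (k : ℕ) : 0 ≤ gg k := Real.rpow_nonneg (Nat.cast_nonneg k) _

lemma gg_zero : gg 0 = 0 := by simp [gg]

lemma gg_antitone {j k : ℕ} (hj : 0 < j) (hjk : j ≤ k) : gg k ≤ gg j :=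
  Real.rpow_le_rpow_of_nonpos (by exact_mod_cast hj) (by exact_mod_cast hjk) (by norm_num)

lemma L1 (M : ℕ) : ∑ a ∈ Icc 1 M, gg a ≤ (7/2) * (M:ℝ) ^ ((2/7 : ℝ)) := by
  rcases Nat.eq_zero_or_pos M with h | h
  · subst h; simp [Real.zero_rpow]
  obtain ⟨m, rfl⟩ : ∃ m, M = m + 1 := ⟨M - 1, (Nat.succ_pred_eq_of_pos h).symm⟩
  have key : AntitoneOn (fun x : ℝ => x ^ (-5/7 : ℝ)) (Set.Icc (1:ℝ) (1 + m)) := by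
    intro x hx y hy hxy
    exact Real.rpow_le_rpow_of_nonpos (lt_of_lt_of_le one_pos hx.1) hxy (by norm_num)
  have hint := key.sum_le_integral
  have hI : (∫ x in (1:ℝ)..(1 + m), x ^ (-5/7 : ℝ)) =
      (((1:ℝ)+m) ^ ((2/7:ℝ)) - 1) / (2/7) := by
    rw [integral_rpow (Or.inl (by norm_num))]
    norm_num
  have hsum : ∑ a ∈ Icc 1 (m+1), gg a = gg 1 + ∑ i ∈ Finset.range m, gg (1 + (i+1)) := by
    rw [show Icc 1 (m+1) = Finset.image (· + 1) (Finset.range (m+1)) by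
      ext a
      simp only [Finset.mem_Icc, Finset.mem_image, Finset.mem_range]
      constructor
      · rintro ⟨h1, h2⟩; exact ⟨a - 1, by omega, by omega⟩
      · rintro ⟨b, hb, rfl⟩; omega]
    rw [Finset.sum_image (by intro a _ b _ h; beta_reduce at h; omega)]
    rw [Finset.sum_range_succ']
    rw [add_comm]
    congr 1
    apply Finset.sum_congr rfl
    intro i _
    congr 1
    omega
  have h2 : ∑ i ∈ Finset.range m, gg (1 + (i+1)) ≤ (((1:ℝ)+m) ^ ((2/7:ℝ)) - 1) / (2/7) := by
    rw [← hI]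
    refine le_trans (le_of_eq ?_) hint
    apply Finset.sum_congr rfl
    intro i _
    simp only [gg]
    push_cast
    ring_nf
  have h3 : (1:ℝ) ≤ ((m:ℝ)+1) ^ ((2/7:ℝ)) :=
    Real.one_le_rpow (le_add_of_nonneg_left (Nat.cast_nonneg m)) (by norm_num)
  have hg1 : gg 1 = 1 := by simp [gg]
  rw [hsum, hg1]
  rw [show ((1:ℝ)+m) = ((m:ℝ)+1) by ring] at h2
  push_cast
  linarith [h2, h3]

noncomputable def gg8 (k : ℕ) : ℝ := (k:ℝ) ^ (-8/7 : ℝ)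

lemma gg8_nonneg (k : ℕ) : 0 ≤ gg8 k := Real.rpow_nonneg (Nat.cast_nonneg k) _

noncomputable def Z : ℝ := ∑' n : ℕ, (n:ℝ) ^ (-8/7 : ℝ)

lemma Zsummable : Summable (fun n : ℕ => (n:ℝ) ^ (-8/7 : ℝ)) :=
  Real.summable_nat_rpow.mpr (by norm_num)

lemma Z_nonneg : 0 ≤ Z := tsum_nonneg (fun n => Real.rpow_nonneg (Nat.cast_nonneg n) _)

lemma L2 (s : Finset ℕ) : ∑ a ∈ s, gg8 a ≤ Z :=
  Summable.sum_le_tsum s (fun i _ => gg8_nonneg i) Zsummable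

lemma rpow_aux {c b m : ℕ} (r : ℝ) (hr : -2 ≤ r) (hr0 : r ≤ 0) (hm : 0 < m)
    (h : m ≤ c * b) :
    (b:ℝ) ^ r ≤ ((c:ℝ))^2 * (m:ℝ) ^ r := by
  have hc : 0 < c := by
    rcases Nat.eq_zero_or_pos c with rfl | hc
    · simp at h; omega
    · exact hc
  have hb : 0 < b := by
    rcases Nat.eq_zero_or_pos b with rfl | hb
    · simp at h; omega
    · exact hb
  have hdiv : (m:ℝ)/c ≤ b := by
    rw [div_le_iff₀ (by exact_mod_cast hc)]
    calc (m:ℝ) ≤ ((c*b : ℕ):ℝ) := by exact_mod_cast h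
    _ = b * c := by push_cast; ring
  have h1 : (b:ℝ) ^ r ≤ ((m:ℝ)/c) ^ r :=
    Real.rpow_le_rpow_of_nonpos (by positivity) hdiv hr0
  have h2 : ((m:ℝ)/c) ^ r = (m:ℝ)^r * ((c:ℝ)^r)⁻¹ := by
    rw [Real.div_rpow (Nat.cast_nonneg m) (Nat.cast_nonneg c)]
    ring
  have h3 : ((c:ℝ)^r)⁻¹ = (c:ℝ)^(-r) := (Real.rpow_neg (Nat.cast_nonneg c) r).symm
  have h4 : (c:ℝ)^(-r) ≤ ((c:ℝ))^2 := by
    have hc1 : (1:ℝ) ≤ (c:ℝ) := by exact_mod_cast hc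
    have : (c:ℝ)^(-r) ≤ (c:ℝ)^((2:ℕ):ℝ) :=
      Real.rpow_le_rpow_of_exponent_le hc1 (by push_cast; linarith)
    rwa [Real.rpow_natCast] at this
  calc (b:ℝ)^r ≤ (m:ℝ)^r * ((c:ℝ)^r)⁻¹ := h2 ▸ h1
  _ = (m:ℝ)^r * (c:ℝ)^(-r) := by rw [h3]
  _ ≤ (m:ℝ)^r * (c:ℝ)^2 := by
      apply mul_le_mul_of_nonneg_left h4 (Real.rpow_nonneg (Nat.cast_nonneg m) r)
  _ = ((c:ℝ))^2 * (m:ℝ)^r := by ring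

lemma gg_le_mul {c b m : ℕ} (hm : 0 < m) (h : m ≤ c * b) : gg b ≤ ((c:ℝ))^2 * gg m :=
  rpow_aux (-5/7) (by norm_num) (by norm_num) hm h

lemma gg8_le_mul {c b m : ℕ} (hm : 0 < m) (h : m ≤ c * b) : gg8 b ≤ ((c:ℝ))^2 * gg8 m :=
  rpow_aux (-8/7) (by norm_num) (by norm_num) hm h

lemma sum_reflect (f : ℕ → ℝ) (m : ℕ) :
    ∑ b ∈ Icc 1 (m-1), f (m - b) = ∑ b ∈ Icc 1 (m-1), f b := by
  refine Finset.sum_nbij' (i := fun b => m - b) (j := fun b => m - b) ?_ ?_ ?_ ?_ ?_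
  · intro a ha; simp only [Finset.mem_Icc] at *; omega
  · intro a ha; simp only [Finset.mem_Icc] at *; omega
  · intro a ha; simp only [Finset.mem_Icc] at ha; show m - (m - a) = a; omega
  · intro a ha; simp only [Finset.mem_Icc] at ha; show m - (m - a) = a; omega
  · intro a ha; rfl

lemma L3 (K m : ℕ) : ∑ b ∈ Icc 1 K, gg b * gg (m - b) ≤ 28 * (m:ℝ) ^ (-3/7 : ℝ) := by
  rcases Nat.eq_zero_or_pos m with rfl | hm
  · have h0 : ∀ b ∈ Icc 1 K, gg b * gg (0 - b) = 0 := by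
      intro b hb
      simp only [Finset.mem_Icc] at hb
      rw [show 0 - b = 0 by omega, gg_zero, mul_zero]
    rw [Finset.sum_congr rfl h0]
    simp [Real.zero_rpow]
  have hm1 : (1:ℝ) ≤ (m:ℝ) := by exact_mod_cast hm
  have hstep1 : ∑ b ∈ Icc 1 K, gg b * gg (m - b)
      = ∑ b ∈ (Icc 1 K).filter (fun b => b < m), gg b * gg (m - b) := by
    symm
    apply Finset.sum_subset (Finset.filter_subset _ _)
    intro b hb hnb
    simp only [Finset.mem_filter, not_and] at hnb
    have : m ≤ b := by
      by_contra hc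
      exact hnb hb (by omega)
    rw [show m - b = 0 by omega, gg_zero, mul_zero]
  have hstep2 : ∑ b ∈ (Icc 1 K).filter (fun b => b < m), gg b * gg (m - b)
      ≤ ∑ b ∈ Icc 1 (m-1), gg b * gg (m - b) := by
    apply Finset.sum_le_sum_of_subset_of_nonneg
    · intro b hb
      simp only [Finset.mem_filter, Finset.mem_Icc] at hb ⊢
      omega
    · exact fun b _ _ => mul_nonneg (gg_nonneg b) (gg_nonneg _)
  have hpt : ∀ b ∈ Icc 1 (m-1),
      gg b * gg (m - b) ≤ 4 * gg m * gg (m - b) + 4 * gg m * gg b := by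
    intro b hb
    simp only [Finset.mem_Icc] at hb
    rcases le_or_gt m (2*b) with h | h
    · have h1 : gg b ≤ 4 * gg m := by
        have := gg_le_mul (c := 2) hm h
        norm_num at this
        linarith
      have h2 := mul_le_mul_of_nonneg_right h1 (gg_nonneg (m - b))
      nlinarith [mul_nonneg (mul_nonneg (by norm_num : (0:ℝ) ≤ 4) (gg_nonneg m)) (gg_nonneg b)]
    · have h1 : gg (m - b) ≤ 4 * gg m := by
        have := gg_le_mul (c := 2) (b := m - b) hm (by omega)
        norm_num at this
        linarith
      have h2 := mul_le_mul_of_nonneg_left h1 (gg_nonneg b)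
      nlinarith [mul_nonneg (mul_nonneg (by norm_num : (0:ℝ) ≤ 4) (gg_nonneg m)) (gg_nonneg (m - b))]
  have hstep3 : ∑ b ∈ Icc 1 (m-1), gg b * gg (m - b)
      ≤ ∑ b ∈ Icc 1 (m-1), (4 * gg m * gg (m - b) + 4 * gg m * gg b) :=
    Finset.sum_le_sum hpt
  have hsplit : ∑ b ∈ Icc 1 (m-1), (4 * gg m * gg (m - b) + 4 * gg m * gg b)
      = 8 * gg m * ∑ b ∈ Icc 1 (m-1), gg b := by
    rw [Finset.sum_add_distrib, ← Finset.mul_sum, ← Finset.mul_sum,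
      sum_reflect (fun k => gg k) m]
    ring
  have hsum : ∑ b ∈ Icc 1 (m-1), gg b ≤ (7/2) * (m:ℝ) ^ ((2/7:ℝ)) := by
    refine le_trans (L1 (m-1)) ?_
    have : ((m-1:ℕ):ℝ) ≤ (m:ℝ) := by
      have : (m-1:ℕ) ≤ m := by omega
      exact_mod_cast this
    have := Real.rpow_le_rpow (Nat.cast_nonneg (m-1)) this (by norm_num : (0:ℝ) ≤ 2/7)
    linarith
  have hfin : 8 * gg m * ((7/2) * (m:ℝ) ^ ((2/7:ℝ))) = 28 * (m:ℝ) ^ (-3/7 : ℝ) := by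
    unfold gg
    rw [show (-3/7:ℝ) = (-5/7) + 2/7 by norm_num,
      Real.rpow_add (by linarith : (0:ℝ) < (m:ℝ))]
    ring
  calc ∑ b ∈ Icc 1 K, gg b * gg (m - b)
      ≤ ∑ b ∈ Icc 1 (m-1), (4 * gg m * gg (m - b) + 4 * gg m * gg b) := by
        rw [hstep1]; exact le_trans hstep2 hstep3
    _ = 8 * gg m * ∑ b ∈ Icc 1 (m-1), gg b := hsplit
    _ ≤ 8 * gg m * ((7/2) * (m:ℝ) ^ ((2/7:ℝ))) := by
        exact mul_le_mul_of_nonneg_left hsum (mul_nonneg (by norm_num) (gg_nonneg m))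
    _ = 28 * (m:ℝ) ^ (-3/7 : ℝ) := hfin

lemma gg8_mul_gg_le {M : ℕ} (hM : 0 < M) : gg8 M * ((7/2) * (M:ℝ) ^ ((2/7:ℝ))) ≤ (7/2) * gg M := by
  have hM1 : (1:ℝ) ≤ (M:ℝ) := by exact_mod_cast hM
  have h1 : gg8 M * (M:ℝ) ^ ((2/7:ℝ)) = (M:ℝ) ^ (-6/7 : ℝ) := by
    unfold gg8
    rw [show (-6/7:ℝ) = (-8/7) + 2/7 by norm_num, Real.rpow_add (by linarith)]
  have h2 : (M:ℝ) ^ (-6/7 : ℝ) ≤ (M:ℝ) ^ (-5/7 : ℝ) :=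
    Real.rpow_le_rpow_of_exponent_le hM1 (by norm_num)
  unfold gg
  nlinarith [h1, h2, Real.rpow_nonneg (Nat.cast_nonneg M) (-6/7 : ℝ)]

lemma L4 (K M : ℕ) : ∑ c ∈ Icc 1 K, gg8 c * gg (M - c) ≤ (4*Z + 14) * gg M := by
  rcases Nat.eq_zero_or_pos M with rfl | hM
  · have h0 : ∀ c ∈ Icc 1 K, gg8 c * gg (0 - c) = 0 := by
      intro c hc
      simp only [Finset.mem_Icc] at hc
      rw [show 0 - c = 0 by omega, gg_zero, mul_zero]
    rw [Finset.sum_congr rfl h0, Finset.sum_const, smul_zero, gg_zero, mul_zero]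
  have hstep1 : ∑ c ∈ Icc 1 K, gg8 c * gg (M - c)
      = ∑ c ∈ (Icc 1 K).filter (fun c => c < M), gg8 c * gg (M - c) := by
    symm
    apply Finset.sum_subset (Finset.filter_subset _ _)
    intro c hc hnc
    simp only [Finset.mem_filter, not_and] at hnc
    have : M ≤ c := by
      by_contra hcon
      exact hnc hc (by omega)
    rw [show M - c = 0 by omega, gg_zero, mul_zero]
  have hstep2 : ∑ c ∈ (Icc 1 K).filter (fun c => c < M), gg8 c * gg (M - c)
      ≤ ∑ c ∈ Icc 1 (M-1), gg8 c * gg (M - c) := by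
    apply Finset.sum_le_sum_of_subset_of_nonneg
    · intro c hc
      simp only [Finset.mem_filter, Finset.mem_Icc] at hc ⊢
      omega
    · exact fun c _ _ => mul_nonneg (gg8_nonneg c) (gg_nonneg _)
  have hpt : ∀ c ∈ Icc 1 (M-1),
      gg8 c * gg (M - c) ≤ 4 * gg8 M * gg (M - c) + 4 * gg M * gg8 c := by
    intro c hc
    simp only [Finset.mem_Icc] at hc
    rcases le_or_gt M (2*c) with h | h
    · have h1 : gg8 c ≤ 4 * gg8 M := by
        have := gg8_le_mul (c := 2) hM h
        norm_num at this
        linarith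
      have h2 := mul_le_mul_of_nonneg_right h1 (gg_nonneg (M - c))
      nlinarith [mul_nonneg (mul_nonneg (by norm_num : (0:ℝ) ≤ 4) (gg_nonneg M)) (gg8_nonneg c)]
    · have h1 : gg (M - c) ≤ 4 * gg M := by
        have := gg_le_mul (c := 2) (b := M - c) hM (by omega)
        norm_num at this
        linarith
      have h2 := mul_le_mul_of_nonneg_left h1 (gg8_nonneg c)
      nlinarith [mul_nonneg (mul_nonneg (by norm_num : (0:ℝ) ≤ 4) (gg8_nonneg M)) (gg_nonneg (M - c))]
  have hstep3 := Finset.sum_le_sum hpt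
  have hsplit : ∑ c ∈ Icc 1 (M-1), (4 * gg8 M * gg (M - c) + 4 * gg M * gg8 c)
      = 4 * gg8 M * (∑ c ∈ Icc 1 (M-1), gg c) + 4 * gg M * ∑ c ∈ Icc 1 (M-1), gg8 c := by
    rw [Finset.sum_add_distrib, ← Finset.mul_sum, ← Finset.mul_sum,
      sum_reflect (fun k => gg k) M]
  have hsum1 : ∑ c ∈ Icc 1 (M-1), gg c ≤ (7/2) * (M:ℝ) ^ ((2/7:ℝ)) := by
    refine le_trans (L1 (M-1)) ?_
    have hle : ((M-1:ℕ):ℝ) ≤ (M:ℝ) := by exact_mod_cast (by omega : M - 1 ≤ M)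
    have := Real.rpow_le_rpow (Nat.cast_nonneg (M-1)) hle (by norm_num : (0:ℝ) ≤ 2/7)
    linarith
  have hsum2 : ∑ c ∈ Icc 1 (M-1), gg8 c ≤ Z := L2 _
  have hZ : 4 * gg8 M * (∑ c ∈ Icc 1 (M-1), gg c) + 4 * gg M * ∑ c ∈ Icc 1 (M-1), gg8 c
      ≤ 4 * gg8 M * ((7/2) * (M:ℝ) ^ ((2/7:ℝ))) + 4 * gg M * Z := by
    have n1 : (0:ℝ) ≤ 4 * gg8 M := mul_nonneg (by norm_num) (gg8_nonneg M)
    have n2 : (0:ℝ) ≤ 4 * gg M := mul_nonneg (by norm_num) (gg_nonneg M)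
    exact add_le_add (mul_le_mul_of_nonneg_left hsum1 n1) (mul_le_mul_of_nonneg_left hsum2 n2)
  have hfin : 4 * gg8 M * ((7/2) * (M:ℝ) ^ ((2/7:ℝ))) + 4 * gg M * Z ≤ (4*Z + 14) * gg M := by
    have := gg8_mul_gg_le hM
    nlinarith [gg_nonneg M, Z_nonneg]
  calc ∑ c ∈ Icc 1 K, gg8 c * gg (M - c)
      ≤ ∑ c ∈ Icc 1 (M-1), (4 * gg8 M * gg (M - c) + 4 * gg M * gg8 c) := by
        rw [hstep1]; exact le_trans hstep2 hstep3
    _ = _ := hsplit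
    _ ≤ 4 * gg8 M * ((7/2) * (M:ℝ) ^ ((2/7:ℝ))) + 4 * gg M * Z := hZ
    _ ≤ (4*Z + 14) * gg M := hfin

lemma L5 (n : ℕ) (hn : 1 ≤ n) : ∑ a ∈ Icc 1 n, gg a * gg (n - 2*a) ≤ 70 := by
  have hn1 : (1:ℝ) ≤ (n:ℝ) := by exact_mod_cast hn
  set t : Finset ℕ := (Icc 1 n).filter (fun a => 2*a < n) with ht
  have hstep1 : ∑ a ∈ Icc 1 n, gg a * gg (n - 2*a) = ∑ a ∈ t, gg a * gg (n - 2*a) := by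
    symm
    apply Finset.sum_subset (Finset.filter_subset _ _)
    intro a ha hna
    simp only [ht, Finset.mem_filter, not_and] at hna
    have : n ≤ 2*a := by
      by_contra hcon
      exact hna ha (by omega)
    rw [show n - 2*a = 0 by omega, gg_zero, mul_zero]
  have hpt : ∀ a ∈ t, gg a * gg (n - 2*a) ≤ 16 * gg n * gg (n - 2*a) + 4 * gg n * gg a := by
    intro a ha
    simp only [ht, Finset.mem_filter, Finset.mem_Icc] at ha
    rcases le_or_gt n (4*a) with h | h
    · have h1 : gg a ≤ 16 * gg n := by
        have := gg_le_mul (c := 4) (by omega : 0 < n) h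
        norm_num at this
        linarith
      have h2 := mul_le_mul_of_nonneg_right h1 (gg_nonneg (n - 2*a))
      nlinarith [mul_nonneg (mul_nonneg (by norm_num : (0:ℝ) ≤ 4) (gg_nonneg n)) (gg_nonneg a)]
    · have h1 : gg (n - 2*a) ≤ 4 * gg n := by
        have := gg_le_mul (c := 2) (b := n - 2*a) (by omega : 0 < n) (by omega)
        norm_num at this
        linarith
      have h2 := mul_le_mul_of_nonneg_left h1 (gg_nonneg a)
      nlinarith [mul_nonneg (mul_nonneg (by norm_num : (0:ℝ) ≤ 16) (gg_nonneg n)) (gg_nonneg (n - 2*a))]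
  have hsumA : ∑ a ∈ t, gg a ≤ (7/2) * (n:ℝ) ^ ((2/7:ℝ)) := by
    refine le_trans (Finset.sum_le_sum_of_subset_of_nonneg (Finset.filter_subset _ _)
      (fun a _ _ => gg_nonneg a)) (L1 n)
  have hsumB : ∑ a ∈ t, gg (n - 2*a) ≤ (7/2) * (n:ℝ) ^ ((2/7:ℝ)) := by
    have himg : ∑ a ∈ t, gg (n - 2*a) = ∑ j ∈ t.image (fun a => n - 2*a), gg j := by
      rw [Finset.sum_image]
      intro a ha b hb hab
      beta_reduce at hab
      simp only [ht, Finset.coe_filter, Finset.mem_coe, Set.mem_setOf_eq, Finset.mem_filter, Finset.mem_Icc] at ha hb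
      omega
    have hsub : t.image (fun a => n - 2*a) ⊆ Icc 1 n := by
      intro j hj
      simp only [Finset.mem_image, ht, Finset.mem_filter, Finset.mem_Icc] at hj
      obtain ⟨a, ⟨⟨h1, h2⟩, h3⟩, rfl⟩ := hj
      simp only [Finset.mem_Icc]
      omega
    rw [himg]
    refine le_trans (Finset.sum_le_sum_of_subset_of_nonneg hsub (fun j _ _ => gg_nonneg j)) (L1 n)
  have hcombine : ∑ a ∈ t, gg a * gg (n - 2*a)
      ≤ 20 * gg n * ((7/2) * (n:ℝ) ^ ((2/7:ℝ))) := by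
    calc ∑ a ∈ t, gg a * gg (n - 2*a)
        ≤ ∑ a ∈ t, (16 * gg n * gg (n - 2*a) + 4 * gg n * gg a) := Finset.sum_le_sum hpt
      _ = 16 * gg n * (∑ a ∈ t, gg (n - 2*a)) + 4 * gg n * ∑ a ∈ t, gg a := by
          rw [Finset.sum_add_distrib, ← Finset.mul_sum, ← Finset.mul_sum]
      _ ≤ 16 * gg n * ((7/2) * (n:ℝ) ^ ((2/7:ℝ))) + 4 * gg n * ((7/2) * (n:ℝ) ^ ((2/7:ℝ))) := by
          have n1 : (0:ℝ) ≤ 16 * gg n := mul_nonneg (by norm_num) (gg_nonneg n)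
          have n2 : (0:ℝ) ≤ 4 * gg n := mul_nonneg (by norm_num) (gg_nonneg n)
          exact add_le_add (mul_le_mul_of_nonneg_left hsumB n1) (mul_le_mul_of_nonneg_left hsumA n2)
      _ = 20 * gg n * ((7/2) * (n:ℝ) ^ ((2/7:ℝ))) := by ring
  have hfin : 20 * gg n * ((7/2) * (n:ℝ) ^ ((2/7:ℝ))) ≤ 70 := by
    have h1 : gg n * (n:ℝ) ^ ((2/7:ℝ)) = (n:ℝ) ^ (-3/7 : ℝ) := by
      unfold gg
      rw [show (-3/7:ℝ) = (-5/7) + 2/7 by norm_num, Real.rpow_add (by linarith)]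
    have h2 : (n:ℝ) ^ (-3/7 : ℝ) ≤ 1 :=
      Real.rpow_le_one_of_one_le_of_nonpos hn1 (by norm_num)
    nlinarith [Real.rpow_nonneg (Nat.cast_nonneg n) (-3/7 : ℝ)]
  rw [hstep1]
  linarith [hcombine, hfin]

lemma Lmain (n : ℕ) (hn : 1 ≤ n) :
    ∑ a ∈ Icc 1 n, ∑ c ∈ Icc 1 n, ∑ b ∈ Icc 1 n,
      gg (n - (2*a + c)) * gg a * gg b * gg ((a+c) - b) * gg c
    ≤ 28 * ((4*Z + 14) * 70) := by
  have hZ : (0:ℝ) ≤ 4*Z + 14 := by linarith [Z_nonneg]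
  have hab : ∀ a ∈ Icc 1 n, ∀ c ∈ Icc 1 n,
      ∑ b ∈ Icc 1 n, gg (n - (2*a + c)) * gg a * gg b * gg ((a+c) - b) * gg c
      ≤ 28 * (gg a * (gg8 c * gg ((n - 2*a) - c))) := by
    intro a ha c hc
    simp only [Finset.mem_Icc] at ha hc
    have hfact : ∑ b ∈ Icc 1 n, gg (n - (2*a + c)) * gg a * gg b * gg ((a+c) - b) * gg c
        = (gg (n - (2*a + c)) * gg a * gg c) * ∑ b ∈ Icc 1 n, gg b * gg ((a+c) - b) := by
      rw [Finset.mul_sum]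
      apply Finset.sum_congr rfl
      intro b _
      ring
    rw [hfact]
    have h3 := L3 n (a + c)
    have hac : ((a+c:ℕ):ℝ) ^ (-3/7:ℝ) ≤ ((c:ℕ):ℝ) ^ (-3/7:ℝ) :=
      Real.rpow_le_rpow_of_nonpos (by exact_mod_cast hc.1)
        (by exact_mod_cast (Nat.le_add_left c a)) (by norm_num)
    have hnn : (0:ℝ) ≤ gg (n - (2*a + c)) * gg a * gg c :=
      mul_nonneg (mul_nonneg (gg_nonneg _) (gg_nonneg _)) (gg_nonneg _)
    have e1 : gg c * ((c:ℕ):ℝ) ^ (-3/7:ℝ) = gg8 c := by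
      unfold gg gg8
      rw [← Real.rpow_add (by exact_mod_cast hc.1 : (0:ℝ) < (c:ℝ))]
      norm_num
    have e2 : n - (2*a + c) = (n - 2*a) - c := by omega
    calc (gg (n - (2*a + c)) * gg a * gg c) * ∑ b ∈ Icc 1 n, gg b * gg ((a+c) - b)
        ≤ (gg (n - (2*a + c)) * gg a * gg c) * (28 * ((a+c:ℕ):ℝ) ^ (-3/7:ℝ)) :=
          mul_le_mul_of_nonneg_left h3 hnn
      _ ≤ (gg (n - (2*a + c)) * gg a * gg c) * (28 * ((c:ℕ):ℝ) ^ (-3/7:ℝ)) := by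
          apply mul_le_mul_of_nonneg_left _ hnn
          linarith
      _ = 28 * (gg a * (gg8 c * gg ((n - 2*a) - c))) := by
          rw [e2, ← e1]
          ring
  have hc2 : ∀ a ∈ Icc 1 n,
      ∑ c ∈ Icc 1 n, 28 * (gg a * (gg8 c * gg ((n - 2*a) - c)))
      ≤ 28 * ((4*Z+14) * (gg a * gg (n - 2*a))) := by
    intro a _
    have hfact : ∑ c ∈ Icc 1 n, 28 * (gg a * (gg8 c * gg ((n - 2*a) - c)))
        = (28 * gg a) * ∑ c ∈ Icc 1 n, gg8 c * gg ((n - 2*a) - c) := by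
      rw [Finset.mul_sum]
      apply Finset.sum_congr rfl
      intro c _
      ring
    rw [hfact]
    have h4 := L4 n (n - 2*a)
    have hnn : (0:ℝ) ≤ 28 * gg a := mul_nonneg (by norm_num) (gg_nonneg a)
    calc (28 * gg a) * ∑ c ∈ Icc 1 n, gg8 c * gg ((n - 2*a) - c)
        ≤ (28 * gg a) * ((4*Z + 14) * gg (n - 2*a)) := mul_le_mul_of_nonneg_left h4 hnn
      _ = 28 * ((4*Z+14) * (gg a * gg (n - 2*a))) := by ring
  calc ∑ a ∈ Icc 1 n, ∑ c ∈ Icc 1 n, ∑ b ∈ Icc 1 n,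
      gg (n - (2*a + c)) * gg a * gg b * gg ((a+c) - b) * gg c
      ≤ ∑ a ∈ Icc 1 n, ∑ c ∈ Icc 1 n, 28 * (gg a * (gg8 c * gg ((n - 2*a) - c))) :=
        Finset.sum_le_sum (fun a ha => Finset.sum_le_sum (fun c hc => hab a ha c hc))
    _ ≤ ∑ a ∈ Icc 1 n, 28 * ((4*Z+14) * (gg a * gg (n - 2*a))) := Finset.sum_le_sum hc2
    _ = 28 * (4*Z+14) * ∑ a ∈ Icc 1 n, gg a * gg (n - 2*a) := by
        rw [Finset.mul_sum]
        apply Finset.sum_congr rfl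
        intro a _
        ring
    _ ≤ 28 * ((4*Z + 14) * 70) := by
        have h5 := L5 n hn
        have : (0:ℝ) ≤ 28 * (4*Z+14) := by linarith
        nlinarith [h5, this]

theorem stmt11 :
    ∃ C : ℝ, 0 < C ∧ ∀ n : ℕ, 2 ≤ n →
      (∑' p : {p : Fin 5 → ℕ // (∀ i, 0 < p i) ∧ p 0 + p 1 + p 2 + p 3 = n ∧
          p 3 + p 2 = p 1 + p 4},
        ∏ i, ((p : Fin 5 → ℕ) i : ℝ) ^ (-5/7 : ℝ)) ≤ C := by
  refine ⟨28 * ((4*Z + 14) * 70), by nlinarith [Z_nonneg], ?_⟩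
  intro n hn
  by_cases hs : Summable (fun p : {p : Fin 5 → ℕ // (∀ i, 0 < p i) ∧
      p 0 + p 1 + p 2 + p 3 = n ∧ p 3 + p 2 = p 1 + p 4} =>
      ∏ i, ((p : Fin 5 → ℕ) i : ℝ) ^ (-5/7 : ℝ))
  swap
  · rw [tsum_eq_zero_of_not_summable hs]
    nlinarith [Z_nonneg]
  apply Summable.tsum_le_of_sum_le hs
  intro u
  set FF : ℕ × ℕ × ℕ → ℝ := fun x =>
    gg (n - (2*x.1 + x.2.1)) * gg x.1 * gg x.2.2 * gg ((x.1 + x.2.1) - x.2.2) * gg x.2.1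
    with hFF
  set φ : {p : Fin 5 → ℕ // (∀ i, 0 < p i) ∧
      p 0 + p 1 + p 2 + p 3 = n ∧ p 3 + p 2 = p 1 + p 4} → ℕ × ℕ × ℕ :=
    fun p => (p.val 1, p.val 4, p.val 2) with hφ
  have hterm : ∀ p : {p : Fin 5 → ℕ // (∀ i, 0 < p i) ∧
      p 0 + p 1 + p 2 + p 3 = n ∧ p 3 + p 2 = p 1 + p 4},
      (∏ i, ((p : Fin 5 → ℕ) i : ℝ) ^ (-5/7 : ℝ)) = FF (φ p) := by
    intro p
    obtain ⟨hpos, he1, he2⟩ := p.2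
    rw [Fin.prod_univ_five]
    have h0 : p.val 0 = n - (2 * p.val 1 + p.val 4) := by omega
    have h3 : p.val 3 = (p.val 1 + p.val 4) - p.val 2 := by omega
    simp only [hFF, hφ]
    rw [← h0, ← h3]
    rfl
  have hFFnn : ∀ x : ℕ × ℕ × ℕ, 0 ≤ FF x := by
    intro x
    exact mul_nonneg (mul_nonneg (mul_nonneg (mul_nonneg (gg_nonneg _) (gg_nonneg _))
      (gg_nonneg _)) (gg_nonneg _)) (gg_nonneg _)
  have hinj : ∀ p ∈ u, ∀ q ∈ u, φ p = φ q → p = q := by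
    intro p _ q _ h
    obtain ⟨hpos, he1, he2⟩ := p.2
    obtain ⟨hpos', hf1, hf2⟩ := q.2
    simp only [hφ, Prod.mk.injEq] at h
    obtain ⟨h1, h4, h2⟩ := h
    have h0 : p.val 0 = q.val 0 := by omega
    have h3 : p.val 3 = q.val 3 := by omega
    apply Subtype.ext
    funext i
    fin_cases i
    · exact h0
    · exact h1
    · exact h2
    · exact h3
    · exact h4
  have himg : u.image φ ⊆ Icc 1 n ×ˢ (Icc 1 n ×ˢ Icc 1 n) := by
    intro x hx
    simp only [Finset.mem_image] at hx
    obtain ⟨p, _, rfl⟩ := hx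
    obtain ⟨hpos, he1, he2⟩ := p.2
    have g0 := hpos 0
    have g1 := hpos 1
    have g2 := hpos 2
    have g3 := hpos 3
    have g4 := hpos 4
    simp only [hφ, Finset.mem_product, Finset.mem_Icc]
    refine ⟨⟨by omega, by omega⟩, ⟨by omega, by omega⟩, by omega, by omega⟩
  calc ∑ p ∈ u, ∏ i, ((p : Fin 5 → ℕ) i : ℝ) ^ (-5/7 : ℝ)
      = ∑ p ∈ u, FF (φ p) := Finset.sum_congr rfl (fun p _ => hterm p)
    _ = ∑ x ∈ u.image φ, FF x := (Finset.sum_image hinj).symm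
    _ ≤ ∑ x ∈ Icc 1 n ×ˢ (Icc 1 n ×ˢ Icc 1 n), FF x :=
        Finset.sum_le_sum_of_subset_of_nonneg himg (fun x _ _ => hFFnn x)
    _ = ∑ a ∈ Icc 1 n, ∑ c ∈ Icc 1 n, ∑ b ∈ Icc 1 n,
        gg (n - (2*a + c)) * gg a * gg b * gg ((a+c) - b) * gg c := by
        rw [Finset.sum_product]
        apply Finset.sum_congr rfl
        intro a _
        rw [Finset.sum_product]
    _ ≤ 28 * ((4*Z + 14) * 70) := Lmain n (by omega)
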